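/- arXiv:1212.1628 — 2 statements merged into one kernel-verified Lean document; each statement's English description precedes it below -/
import Mathlib

section
/- The quenched average of the flipped-disorder pressure difference under the F₀-interpolation vanishes: Av(X₀) = 0, where X₀ := P₀(0) − P₀(π). -/
open MeasureTheory ProbabilityTheory Real Finset
open scoped NNReal

noncomputable section

namespace InteractionFlip

variable {ι : Type*} [DecidableEq ι] {Ω : Type*} [MeasurableSpace Ω]

/-- The spin product `σ_X = ∏_{i ∈ X} σ_i` of a configuration `σ : Λ → {±1}`
(encoded via `Bool`, `true ↦ 1`, `false ↦ -1`; sites outside `Λ` contribute `1`). -/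
def sigmaX {Λ : Finset ι} (σ : ↥Λ → Bool) (X : Finset ι) : ℝ :=
  ∏ i ∈ X, (if h : i ∈ Λ then (if σ ⟨i, h⟩ then (1 : ℝ) else -1) else 1)

/-- `−∑_{∅ ≠ X ⊆ S} K_X σ_X`. -/
def hamOn {Λ : Finset ι} (K : Finset ι → ℝ) (S : Finset ι) (σ : ↥Λ → Bool) : ℝ :=
  -∑ X ∈ S.powerset.erase ∅, K X * sigmaX σ X

/-- `−∑_{X ⊆ Λ, X ⊄ Λ'} K_X σ_X`. -/
def hamOut (K : Finset ι → ℝ) (Λ Λ' : Finset ι) (σ : ↥Λ → Bool) : ℝ :=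
  -∑ X ∈ Λ.powerset.filter (fun X => ¬ X ⊆ Λ'), K X * sigmaX σ X

/-- The `F₀`-interpolating Hamiltonian
`X⁰_t(σ) = cos t · H⁰_{Λ'}(σ) + sin t · H̃⁰_{Λ'}(σ) + B_{Λ'}(σ) + H_{Λ∖Λ'}(σ)`. -/
def XF0 (J Jt : Finset ι → Ω → ℝ) (μ : Finset ι → ℝ) (Λ Λ' : Finset ι)
    (t : ℝ) (ω : Ω) (σ : ↥Λ → Bool) : ℝ :=
  Real.cos t * hamOn (fun X => J X ω - μ X) Λ' σ
    + Real.sin t * hamOn (fun X => Jt X ω - μ X) Λ' σ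
    + hamOn μ Λ' σ + hamOut (fun X => J X ω) Λ Λ' σ

/-- The random pressure `P₀(t) = ln ∑_σ exp(−β X⁰_t(σ))`. -/
def PF0 (J Jt : Finset ι → Ω → ℝ) (μ : Finset ι → ℝ) (Λ Λ' : Finset ι)
    (β t : ℝ) (ω : Ω) : ℝ :=
  Real.log (∑ σ : ↥Λ → Bool, Real.exp (-β * XF0 J Jt μ Λ Λ' t ω σ))

end InteractionFlip

open InteractionFlip

section AuxLemmas

/-- The identity is integrable with respect to a Gaussian measure. -/
lemma integrable_id_gaussianReal (m : ℝ) (v : ℝ≥0) :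
    Integrable (id : ℝ → ℝ) (gaussianReal m v) := by
  by_cases hv : v = 0
  · subst hv
    rw [gaussianReal_zero_var]
    exact (integrable_const m).congr (MeasureTheory.ae_eq_dirac (id : ℝ → ℝ)).symm
  · rw [gaussianReal_of_var_ne_zero _ hv,
      integrable_withDensity_iff (measurable_gaussianPDF m v)
        (Filter.Eventually.of_forall fun x => ENNReal.ofReal_lt_top)]
    have hvpos : (0:ℝ) < (v:ℝ) := by
      exact_mod_cast zero_lt_iff.mpr hv
    have hb : 0 < (2 * (v:ℝ))⁻¹ := by positivity
    have int1 : Integrable (fun y : ℝ => y * Real.exp (-(2 * (v:ℝ))⁻¹ * y ^ 2)) := by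
      have h := integrable_rpow_mul_exp_neg_mul_sq hb (s := 1) (by norm_num)
      simpa using h
    have int2 : Integrable (fun y : ℝ => Real.exp (-(2 * (v:ℝ))⁻¹ * y ^ 2)) :=
      integrable_exp_neg_mul_sq hb
    have key : Integrable (fun y : ℝ =>
        (Real.sqrt (2 * π * v))⁻¹ * ((y + m) * Real.exp (-(2 * (v:ℝ))⁻¹ * y ^ 2))) := by
      refine Integrable.const_mul ?_ _
      have heq : (fun y : ℝ => (y + m) * Real.exp (-(2 * (v:ℝ))⁻¹ * y ^ 2))
          = fun y => y * Real.exp (-(2 * (v:ℝ))⁻¹ * y ^ 2)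
            + m * Real.exp (-(2 * (v:ℝ))⁻¹ * y ^ 2) := by
        funext y; ring
      rw [heq]
      exact int1.add (int2.const_mul m)
    have key2 := key.comp_sub_right m
    refine key2.congr (Filter.Eventually.of_forall fun x => ?_)
    have hx : -(x - m) ^ 2 / (2 * (v:ℝ)) = -(2 * (v:ℝ))⁻¹ * (x - m) ^ 2 := by
      rw [neg_div, div_eq_inv_mul, neg_mul]
    simp only [id_eq, gaussianPDF]
    rw [ENNReal.toReal_ofReal (gaussianPDFReal_nonneg m v x)]
    simp only [gaussianPDFReal]
    rw [hx]
    ring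

/-- The Gaussian measure is invariant under reflection about its mean. -/
lemma gaussianReal_map_flip (m : ℝ) (v : ℝ≥0) :
    (gaussianReal m v).map (fun x => 2 * m - x) = gaussianReal m v := by
  have h1 : (fun x : ℝ => 2 * m - x) = (fun y : ℝ => y + 2 * m) ∘ (fun x : ℝ => (-1) * x) := by
    funext x; simp [Function.comp]; ring
  rw [h1, ← Measure.map_map (measurable_add_const (2 * m)) (measurable_const_mul (-1)),
    gaussianReal_map_const_mul, gaussianReal_map_add_const]
  congr 1
  · ring
  · refine NNReal.coe_injective ?_
    push_cast
    norm_num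

/-- Bound on the log of a finite sum of exponentials. -/
lemma abs_log_sum_exp_le {α : Type*} [Fintype α] [Nonempty α] (f : α → ℝ) {C : ℝ}
    (hC : ∀ a, |f a| ≤ C) :
    |Real.log (∑ a, Real.exp (f a))| ≤ Real.log (Fintype.card α) + C := by
  have hpos : 0 < ∑ a, Real.exp (f a) :=
    Finset.sum_pos (fun a _ => Real.exp_pos _) Finset.univ_nonempty
  have hcard1 : (1:ℝ) ≤ (Fintype.card α : ℝ) := by exact_mod_cast Fintype.card_pos
  have hlogcard : 0 ≤ Real.log (Fintype.card α) := Real.log_nonneg hcard1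
  rw [abs_le]
  constructor
  · have h0 : Real.exp (-C) ≤ ∑ a, Real.exp (f a) := by
      have a : α := Classical.arbitrary α
      calc Real.exp (-C) ≤ Real.exp (f a) :=
            Real.exp_le_exp.mpr ((abs_le.mp (hC a)).1)
        _ ≤ ∑ a, Real.exp (f a) :=
            Finset.single_le_sum (fun a _ => (Real.exp_pos _).le) (Finset.mem_univ a)
    have h := Real.log_le_log (Real.exp_pos _) h0
    rw [Real.log_exp] at h
    linarith
  · have h1 : ∑ a, Real.exp (f a) ≤ (Fintype.card α : ℝ) * Real.exp C := by
      calc ∑ a, Real.exp (f a) ≤ ∑ _a : α, Real.exp C :=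
            Finset.sum_le_sum fun a _ => Real.exp_le_exp.mpr ((abs_le.mp (hC a)).2)
        _ = _ := by rw [Finset.sum_const, Finset.card_univ, nsmul_eq_mul]
    have h := Real.log_le_log hpos h1
    rwa [Real.log_mul (by positivity) (Real.exp_ne_zero _), Real.log_exp] at h

variable {ι : Type*} [DecidableEq ι]

lemma abs_sigmaX_le_one {Λ : Finset ι} (σ : ↥Λ → Bool) (X : Finset ι) :
    |sigmaX σ X| ≤ 1 := by
  unfold sigmaX
  rw [Finset.abs_prod]
  refine Finset.prod_le_one (fun i _ => abs_nonneg _) (fun i _ => ?_)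
  split_ifs <;> simp

lemma abs_hamOn_le {Λ : Finset ι} (K : Finset ι → ℝ) (S : Finset ι) (σ : ↥Λ → Bool) :
    |hamOn K S σ| ≤ ∑ X ∈ S.powerset.erase ∅, |K X| := by
  unfold hamOn
  rw [abs_neg]
  refine (Finset.abs_sum_le_sum_abs _ _).trans (Finset.sum_le_sum fun X _ => ?_)
  rw [abs_mul]
  calc |K X| * |sigmaX σ X| ≤ |K X| * 1 :=
        mul_le_mul_of_nonneg_left (abs_sigmaX_le_one σ X) (abs_nonneg _)
    _ = |K X| := mul_one _

lemma abs_hamOut_le {Λ Λ' : Finset ι} (K : Finset ι → ℝ) (σ : ↥Λ → Bool) :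
    |hamOut K Λ Λ' σ| ≤ ∑ X ∈ Λ.powerset.filter (fun X => ¬ X ⊆ Λ'), |K X| := by
  unfold hamOut
  rw [abs_neg]
  refine (Finset.abs_sum_le_sum_abs _ _).trans (Finset.sum_le_sum fun X _ => ?_)
  rw [abs_mul]
  calc |K X| * |sigmaX σ X| ≤ |K X| * 1 :=
        mul_le_mul_of_nonneg_left (abs_sigmaX_le_one σ X) (abs_nonneg _)
    _ = |K X| := mul_one _

lemma hamOn_congr {Λ : Finset ι} {K K' : Finset ι → ℝ} {S : Finset ι}
    (h : ∀ X ∈ S.powerset.erase ∅, K X = K' X) (σ : ↥Λ → Bool) :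
    hamOn K S σ = hamOn K' S σ := by
  unfold hamOn
  exact congrArg Neg.neg (Finset.sum_congr rfl fun X hX => by rw [h X hX])

lemma hamOut_congr {Λ Λ' : Finset ι} {K K' : Finset ι → ℝ}
    (h : ∀ X ∈ Λ.powerset.filter (fun X => ¬ X ⊆ Λ'), K X = K' X) (σ : ↥Λ → Bool) :
    hamOut K Λ Λ' σ = hamOut K' Λ Λ' σ := by
  unfold hamOut
  exact congrArg Neg.neg (Finset.sum_congr rfl fun X hX => by rw [h X hX])

lemma hamOn_neg {Λ : Finset ι} (K : Finset ι → ℝ) (S : Finset ι) (σ : ↥Λ → Bool) :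
    hamOn (fun X => -K X) S σ = -hamOn K S σ := by
  unfold hamOn
  simp [neg_mul, Finset.sum_neg_distrib]

/-- Coupling vector extended to all subsets. -/
def KofAux (Λ : Finset ι) (v : ↥(Λ.powerset.erase ∅) → ℝ) (X : Finset ι) : ℝ :=
  if h : X ∈ Λ.powerset.erase ∅ then v ⟨X, h⟩ else 0

/-- Pressure as a function of the coupling vector (at `t = 0`). -/
def GAux (Λ Λ' : Finset ι) (μ : Finset ι → ℝ) (β : ℝ)
    (v : ↥(Λ.powerset.erase ∅) → ℝ) : ℝ :=
  Real.log (∑ σ : ↥Λ → Bool, Real.exp (-β *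
    (hamOn (fun X => KofAux Λ v X - μ X) Λ' σ + hamOn μ Λ' σ + hamOut (KofAux Λ v) Λ Λ' σ)))

/-- Flip of the couplings inside `Λ'` about their means. -/
def flipAux (Λ Λ' : Finset ι) (μ : Finset ι → ℝ) (v : ↥(Λ.powerset.erase ∅) → ℝ)
    (X : ↥(Λ.powerset.erase ∅)) : ℝ :=
  if (X : Finset ι) ⊆ Λ' then 2 * μ X - v X else v X

lemma measurable_KofAux (Λ : Finset ι) (X : Finset ι) :
    Measurable (fun v : ↥(Λ.powerset.erase ∅) → ℝ => KofAux Λ v X) := by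
  unfold KofAux
  split_ifs with h
  · exact measurable_pi_apply _
  · exact measurable_const

lemma measurable_GAux (Λ Λ' : Finset ι) (μ : Finset ι → ℝ) (β : ℝ) :
    Measurable (GAux Λ Λ' μ β) := by
  unfold GAux
  apply Measurable.log
  apply Finset.measurable_sum
  intro σ _
  apply Measurable.exp
  apply Measurable.const_mul
  have h1 : Measurable fun v : ↥(Λ.powerset.erase ∅) → ℝ =>
      hamOn (fun X => KofAux Λ v X - μ X) Λ' σ := by
    unfold hamOn
    apply Measurable.neg
    apply Finset.measurable_sum
    intro X _
    exact ((measurable_KofAux Λ X).sub measurable_const).mul_const _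
  have h2 : Measurable fun v : ↥(Λ.powerset.erase ∅) → ℝ =>
      hamOut (KofAux Λ v) Λ Λ' σ := by
    unfold hamOut
    apply Measurable.neg
    apply Finset.measurable_sum
    intro X _
    exact (measurable_KofAux Λ X).mul_const _
  exact (h1.add measurable_const).add h2

end AuxLemmas

/-- under the `F₀`-interpolation, `Av(X₀) = 0` where
`X₀ = P₀(0) − P₀(π)`. -/
theorem statement0
    {ι : Type*} [DecidableEq ι] {Ω : Type*} [MeasurableSpace Ω]
    (P : Measure Ω) [IsProbabilityMeasure P]
    (Λ Λ' : Finset ι) (hΛ : Λ.Nonempty) (hsub : Λ' ⊆ Λ)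
    (μ : Finset ι → ℝ) (Δ2 : Finset ι → ℝ≥0)
    (J Jt : Finset ι → Ω → ℝ)
    (hJ : ∀ X ∈ Λ.powerset.erase ∅, P.map (J X) = gaussianReal (μ X) (Δ2 X))
    (hJt : ∀ X ∈ Λ.powerset.erase ∅, P.map (Jt X) = gaussianReal (μ X) (Δ2 X))
    (hindep : iIndepFun
      (fun p : ↥(Λ.powerset.erase ∅) × Bool =>
        fun ω => if p.2 then Jt p.1.1 ω else J p.1.1 ω) P)
    (β : ℝ) (hβ : 0 < β) :
    ∫ ω, (PF0 J Jt μ Λ Λ' β 0 ω - PF0 J Jt μ Λ Λ' β π ω) ∂P = 0 := by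
  classical
  -- membership helpers
  have hmemOn : ∀ X ∈ Λ'.powerset.erase ∅, X ∈ Λ.powerset.erase ∅ := by
    intro X hX
    rw [Finset.mem_erase, Finset.mem_powerset] at hX ⊢
    exact ⟨hX.1, hX.2.trans hsub⟩
  have hmemOut : ∀ X ∈ Λ.powerset.filter (fun X => ¬ X ⊆ Λ'), X ∈ Λ.powerset.erase ∅ := by
    intro X hX
    rw [Finset.mem_filter, Finset.mem_powerset] at hX
    rw [Finset.mem_erase, Finset.mem_powerset]
    refine ⟨?_, hX.1⟩
    rintro rfl
    exact hX.2 (Finset.empty_subset _)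
  -- a.e.-measurability and integrability of the couplings
  have hJae : ∀ X : ↥(Λ.powerset.erase ∅), AEMeasurable (J X.1) P := by
    intro X
    apply aemeasurable_of_map_neZero
    rw [hJ X.1 X.2]
    infer_instance
  have hJint : ∀ X : ↥(Λ.powerset.erase ∅), Integrable (fun ω => J X.1 ω) P := by
    intro X
    have h2 : Integrable (id : ℝ → ℝ) (P.map (J X.1)) := by
      rw [hJ X.1 X.2]; exact integrable_id_gaussianReal _ _
    simpa [Function.comp] using
      (integrable_map_measure aestronglyMeasurable_id (hJae X)).mp h2
  -- the coupling vector
  set V : Ω → (↥(Λ.powerset.erase ∅) → ℝ) := fun ω X => J X.1 ω with hVdef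
  have hVae : AEMeasurable V P := by
    refine ⟨fun ω X => (hJae X).mk _ ω,
      measurable_pi_lambda _ (fun X => (hJae X).measurable_mk), ?_⟩
    have hae : ∀ᵐ ω ∂P, ∀ X : ↥(Λ.powerset.erase ∅), J X.1 ω = (hJae X).mk _ ω :=
      (ae_all_iff).mpr fun X => (hJae X).ae_eq_mk
    filter_upwards [hae] with ω hω
    rw [hVdef]
    funext X
    exact hω X
  set ν : Measure (↥(Λ.powerset.erase ∅) → ℝ) := P.map V with hνdef
  -- the law of the coupling vector is the product of the Gaussians
  have hν : ν = Measure.pi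
      (fun X : ↥(Λ.powerset.erase ∅) => gaussianReal (μ X.1) (Δ2 X.1)) := by
    refine (Measure.pi_eq fun t ht => ?_).symm
    rw [hνdef, Measure.map_apply_of_aemeasurable hVae (MeasurableSet.univ_pi ht)]
    have hpre : V ⁻¹' (Set.pi Set.univ t) =
        ⋂ p ∈ (Finset.univ : Finset (↥(Λ.powerset.erase ∅) × Bool)),
          (fun ω => if p.2 then Jt p.1.1 ω else J p.1.1 ω) ⁻¹'
            ((fun p : ↥(Λ.powerset.erase ∅) × Bool =>
              if p.2 then Set.univ else t p.1) p) := by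
      ext ω
      simp only [hVdef, Set.mem_preimage, Set.mem_pi, Set.mem_univ, true_implies,
        Set.mem_iInter, Finset.mem_univ, Prod.forall, Bool.forall_bool,
        if_true, if_false, and_true, forall_true_left]
      tauto
    have hsets : ∀ p ∈ (Finset.univ : Finset (↥(Λ.powerset.erase ∅) × Bool)),
        MeasurableSet ((fun p : ↥(Λ.powerset.erase ∅) × Bool =>
          if p.2 then Set.univ else t p.1) p) := by
      intro p _
      by_cases hp : p.2 <;> simp [hp, ht p.1]
    rw [hpre, hindep.measure_inter_preimage_eq_mul Finset.univ hsets]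
    rw [Fintype.prod_prod_type]
    refine Finset.prod_congr rfl fun X _ => ?_
    rw [Fintype.prod_bool]
    norm_num
    rw [← hJ X.1 X.2, Measure.map_apply_of_aemeasurable (hJae X) (ht X)]
  -- the flip is measure preserving
  have hTpres : MeasurePreserving (flipAux Λ Λ' μ) ν ν := by
    rw [hν]
    have hcomp : ∀ X : ↥(Λ.powerset.erase ∅),
        MeasurePreserving (fun x : ℝ => if (X : Finset ι) ⊆ Λ' then 2 * μ X.1 - x else x)
          (gaussianReal (μ X.1) (Δ2 X.1)) (gaussianReal (μ X.1) (Δ2 X.1)) := by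
      intro X
      by_cases hX : (X : Finset ι) ⊆ Λ'
      · simp only [if_pos hX]
        exact ⟨measurable_const.sub measurable_id, gaussianReal_map_flip _ _⟩
      · simp only [if_neg hX]
        exact MeasurePreserving.id _
    exact measurePreserving_pi _ _ hcomp
  -- pointwise identification of the pressures
  have hP0 : ∀ ω, PF0 J Jt μ Λ Λ' β 0 ω = GAux Λ Λ' μ β (V ω) := by
    intro ω
    unfold PF0 GAux
    congr 1
    refine Finset.sum_congr rfl fun σ _ => ?_
    have hXA : XF0 J Jt μ Λ Λ' 0 ω σ =
        hamOn (fun X => KofAux Λ (V ω) X - μ X) Λ' σ + hamOn μ Λ' σ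
          + hamOut (KofAux Λ (V ω)) Λ Λ' σ := by
      unfold XF0
      rw [Real.cos_zero, Real.sin_zero, one_mul, zero_mul, add_zero]
      have e1 : hamOn (fun X => J X ω - μ X) Λ' σ =
          hamOn (fun X => KofAux Λ (V ω) X - μ X) Λ' σ := by
        refine hamOn_congr (fun X hX => ?_) σ
        unfold KofAux
        rw [dif_pos (hmemOn X hX)]
      have e2 : hamOut (fun X => J X ω) Λ Λ' σ = hamOut (KofAux Λ (V ω)) Λ Λ' σ := by
        refine hamOut_congr (fun X hX => ?_) σ
        unfold KofAux
        rw [dif_pos (hmemOut X hX)]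
      rw [e1, e2]
    rw [hXA]
  have hPpi : ∀ ω, PF0 J Jt μ Λ Λ' β π ω = GAux Λ Λ' μ β (flipAux Λ Λ' μ (V ω)) := by
    intro ω
    unfold PF0 GAux
    congr 1
    refine Finset.sum_congr rfl fun σ _ => ?_
    have hXB : XF0 J Jt μ Λ Λ' π ω σ =
        hamOn (fun X => KofAux Λ (flipAux Λ Λ' μ (V ω)) X - μ X) Λ' σ + hamOn μ Λ' σ
          + hamOut (KofAux Λ (flipAux Λ Λ' μ (V ω))) Λ Λ' σ := by
      unfold XF0
      rw [Real.cos_pi, Real.sin_pi, zero_mul, add_zero, neg_one_mul]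
      have e1 : hamOn (fun X => KofAux Λ (flipAux Λ Λ' μ (V ω)) X - μ X) Λ' σ =
          -hamOn (fun X => J X ω - μ X) Λ' σ := by
        rw [← hamOn_neg]
        refine hamOn_congr (fun X hX => ?_) σ
        have hm := hmemOn X hX
        have hXsub : X ⊆ Λ' := by
          rw [Finset.mem_erase, Finset.mem_powerset] at hX
          exact hX.2
        unfold KofAux
        rw [dif_pos hm]
        unfold flipAux
        rw [if_pos hXsub]
        simp only [hVdef]
        ring
      have e2 : hamOut (KofAux Λ (flipAux Λ Λ' μ (V ω))) Λ Λ' σ =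
          hamOut (fun X => J X ω) Λ Λ' σ := by
        refine hamOut_congr (fun X hX => ?_) σ
        have hm := hmemOut X hX
        have hXsub : ¬ X ⊆ Λ' := by
          rw [Finset.mem_filter] at hX
          exact hX.2
        unfold KofAux
        rw [dif_pos hm]
        unfold flipAux
        rw [if_neg hXsub]
      rw [e1, e2]
    rw [hXB]
  -- uniform integrable bound on the pressure
  set Dfun : Ω → ℝ := fun ω =>
      (∑ X ∈ Λ'.powerset.erase ∅, (|J X ω - μ X| + |μ X|)) +
        ∑ X ∈ Λ.powerset.filter (fun X => ¬ X ⊆ Λ'), |J X ω| with hDdef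
  have hbound : ∀ ω, |GAux Λ Λ' μ β (V ω)| ≤
      Real.log (Fintype.card (↥Λ → Bool)) + β * Dfun ω := by
    intro ω
    unfold GAux
    refine abs_log_sum_exp_le _ fun σ => ?_
    rw [abs_mul, abs_neg, abs_of_pos hβ]
    refine mul_le_mul_of_nonneg_left ?_ hβ.le
    have h1 : |hamOn (fun X => KofAux Λ (V ω) X - μ X) Λ' σ| ≤
        ∑ X ∈ Λ'.powerset.erase ∅, |J X ω - μ X| := by
      refine (abs_hamOn_le _ _ _).trans_eq ?_
      refine Finset.sum_congr rfl fun X hX => ?_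
      unfold KofAux
      rw [dif_pos (hmemOn X hX)]
    have h2 : |hamOn μ Λ' σ| ≤ ∑ X ∈ Λ'.powerset.erase ∅, |μ X| := abs_hamOn_le _ _ _
    have h3 : |hamOut (KofAux Λ (V ω)) Λ Λ' σ| ≤
        ∑ X ∈ Λ.powerset.filter (fun X => ¬ X ⊆ Λ'), |J X ω| := by
      refine (abs_hamOut_le _ _).trans_eq ?_
      refine Finset.sum_congr rfl fun X hX => ?_
      unfold KofAux
      rw [dif_pos (hmemOut X hX)]
    have habs1 := abs_add_le (hamOn (fun X => KofAux Λ (V ω) X - μ X) Λ' σ + hamOn μ Λ' σ)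
      (hamOut (KofAux Λ (V ω)) Λ Λ' σ)
    have habs2 := abs_add_le (hamOn (fun X => KofAux Λ (V ω) X - μ X) Λ' σ) (hamOn μ Λ' σ)
    have hsum : Dfun ω = (∑ X ∈ Λ'.powerset.erase ∅, |J X ω - μ X|) +
        (∑ X ∈ Λ'.powerset.erase ∅, |μ X|) +
        ∑ X ∈ Λ.powerset.filter (fun X => ¬ X ⊆ Λ'), |J X ω| := by
      simp only [hDdef]
      rw [Finset.sum_add_distrib]
    rw [hsum]
    linarith
  -- integrability
  have hDint : Integrable Dfun P := by
    rw [hDdef]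
    apply Integrable.add
    · apply integrable_finset_sum
      intro X hX
      exact (((hJint ⟨X, hmemOn X hX⟩).sub (integrable_const _)).abs).add (integrable_const _)
    · apply integrable_finset_sum
      intro X hX
      exact (hJint ⟨X, hmemOut X hX⟩).abs
  have hint1 : Integrable (fun ω => GAux Λ Λ' μ β (V ω)) P := by
    refine Integrable.mono' ((integrable_const
        (Real.log (Fintype.card (↥Λ → Bool)))).add (hDint.const_mul β)) ?_ ?_
    · exact ((measurable_GAux Λ Λ' μ β).comp_aemeasurable hVae).aestronglyMeasurable
    · exact Filter.Eventually.of_forall fun ω => by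
        simpa [Real.norm_eq_abs] using hbound ω
  have hintG : Integrable (GAux Λ Λ' μ β) ν :=
    (integrable_map_measure (measurable_GAux Λ Λ' μ β).aestronglyMeasurable hVae).mpr
      (by exact hint1)
  have hTae : AEMeasurable (fun ω => flipAux Λ Λ' μ (V ω)) P :=
    hTpres.measurable.comp_aemeasurable hVae
  have hmapTV : P.map (fun ω => flipAux Λ Λ' μ (V ω)) = ν := by
    calc P.map (fun ω => flipAux Λ Λ' μ (V ω))
        = ν.map (flipAux Λ Λ' μ) := by
          rw [hνdef]
          exact (AEMeasurable.map_map_of_aemeasurable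
            (by rw [← hνdef]; exact hTpres.measurable.aemeasurable) hVae).symm
      _ = ν := hTpres.map_eq
  have hint2 : Integrable (fun ω => GAux Λ Λ' μ β (flipAux Λ Λ' μ (V ω))) P := by
    have h := (integrable_map_measure (measurable_GAux Λ Λ' μ β).aestronglyMeasurable
      hTae).mp (by rw [hmapTV]; exact hintG)
    exact h
  -- conclusion
  have e0 : ∫ ω, (PF0 J Jt μ Λ Λ' β 0 ω - PF0 J Jt μ Λ Λ' β π ω) ∂P
      = ∫ ω, (GAux Λ Λ' μ β (V ω) - GAux Λ Λ' μ β (flipAux Λ Λ' μ (V ω))) ∂P := by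
    refine integral_congr_ae (Filter.Eventually.of_forall fun ω => ?_)
    simp only [hP0 ω, hPpi ω]
  rw [e0, integral_sub hint1 hint2]
  have e1 : ∫ ω, GAux Λ Λ' μ β (V ω) ∂P = ∫ v, GAux Λ Λ' μ β v ∂ν :=
    (integral_map hVae (measurable_GAux Λ Λ' μ β).aestronglyMeasurable).symm
  have e2 : ∫ ω, GAux Λ Λ' μ β (flipAux Λ Λ' μ (V ω)) ∂P = ∫ v, GAux Λ Λ' μ β v ∂ν := by
    calc ∫ ω, GAux Λ Λ' μ β (flipAux Λ Λ' μ (V ω)) ∂P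
        = ∫ v, GAux Λ Λ' μ β v ∂(P.map (fun ω => flipAux Λ Λ' μ (V ω))) :=
          (integral_map hTae (measurable_GAux Λ Λ' μ β).aestronglyMeasurable).symm
      _ = _ := by rw [hmapTV]
  rw [e1, e2, sub_self]
end
end

section
/- Truncated-correlation structure of the replicon polynomial: for any two random Gibbs states ω_t, ω_s on {−1,+1}^Λ and the normalized covariance c(σ,τ) := C_{Λ'}(σ,τ)/|Λ'|, one has the deterministic identity ω_t⊗ω_s(c(σ¹,σ²)²) − ω_s⊗ω_t⊗ω_s(c(σ¹,σ²)c(σ²,σ³)) − ω_t⊗ω_s⊗ω_t(c(σ¹,σ²)c(σ²,σ³)) + ω_t⊗ω_s⊗ω_s⊗ω_t(c(σ¹,σ²)c(σ³,σ⁴)) = (1/|Λ'|²) ∑_{∅≠X⊆Λ'} ∑_{∅≠Y⊆Λ'} Δ_X²Δ_Y² [ω_t(σ_Xσ_Y) − ω_t(σ_X)ω_t(σ_Y)][ω_s(σ_Xσ_Y) − ω_s(σ_X)ω_s(σ_Y)], where ω_{t₁}⊗…⊗ω_{tₙ}(f) denotes the product state applied to the replica observable f. -/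
open MeasureTheory Real Finset
open scoped NNReal

noncomputable section

namespace InteractionFlip

variable {ι : Type*} [DecidableEq ι]

/-- The covariance `C_S(σ,τ) = ∑_{∅ ≠ X ⊆ S} Δ_X² σ_X τ_X`. -/
def covOn {Λ : Finset ι} (Δ2 : Finset ι → ℝ≥0) (S : Finset ι) (σ τ : ↥Λ → Bool) : ℝ :=
  ∑ X ∈ S.powerset.erase ∅, (Δ2 X : ℝ) * sigmaX σ X * sigmaX τ X

end InteractionFlip

open InteractionFlip

section Helpers
variable {A B : Type*} [Fintype A]

private lemma pull2 (P Q : Finset B) (F : A → B → B → ℝ) :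
    ∑ a : A, ∑ X ∈ P, ∑ Y ∈ Q, F a X Y = ∑ X ∈ P, ∑ Y ∈ Q, ∑ a : A, F a X Y := by
  rw [Finset.sum_comm]
  exact Finset.sum_congr rfl fun X _ => Finset.sum_comm

private lemma swap2 (P Q : Finset B) (F : A → A → B → B → ℝ) :
    ∑ a : A, ∑ b : A, ∑ X ∈ P, ∑ Y ∈ Q, F a b X Y
      = ∑ X ∈ P, ∑ Y ∈ Q, ∑ a : A, ∑ b : A, F a b X Y := by
  calc ∑ a : A, ∑ b : A, ∑ X ∈ P, ∑ Y ∈ Q, F a b X Y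
      = ∑ a : A, ∑ X ∈ P, ∑ Y ∈ Q, ∑ b : A, F a b X Y :=
        Finset.sum_congr rfl fun a _ => pull2 P Q _
    _ = _ := pull2 P Q _

private lemma swap3 (P Q : Finset B) (F : A → A → A → B → B → ℝ) :
    ∑ a : A, ∑ b : A, ∑ c : A, ∑ X ∈ P, ∑ Y ∈ Q, F a b c X Y
      = ∑ X ∈ P, ∑ Y ∈ Q, ∑ a : A, ∑ b : A, ∑ c : A, F a b c X Y := by
  calc ∑ a : A, ∑ b : A, ∑ c : A, ∑ X ∈ P, ∑ Y ∈ Q, F a b c X Y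
      = ∑ a : A, ∑ X ∈ P, ∑ Y ∈ Q, ∑ b : A, ∑ c : A, F a b c X Y :=
        Finset.sum_congr rfl fun a _ => swap2 P Q _
    _ = _ := pull2 P Q _

private lemma swap4 (P Q : Finset B) (F : A → A → A → A → B → B → ℝ) :
    ∑ a : A, ∑ b : A, ∑ c : A, ∑ d : A, ∑ X ∈ P, ∑ Y ∈ Q, F a b c d X Y
      = ∑ X ∈ P, ∑ Y ∈ Q, ∑ a : A, ∑ b : A, ∑ c : A, ∑ d : A, F a b c d X Y := by
  calc ∑ a : A, ∑ b : A, ∑ c : A, ∑ d : A, ∑ X ∈ P, ∑ Y ∈ Q, F a b c d X Y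
      = ∑ a : A, ∑ X ∈ P, ∑ Y ∈ Q, ∑ b : A, ∑ c : A, ∑ d : A, F a b c d X Y :=
        Finset.sum_congr rfl fun a _ => swap3 P Q _
    _ = _ := pull2 P Q _

private lemma fact2c (c : ℝ) (f g : A → ℝ) :
    (∑ a : A, ∑ b : A, c * f a * g b) = c * (∑ a : A, f a) * (∑ b : A, g b) := by
  calc ∑ a : A, ∑ b : A, c * f a * g b
      = ∑ a : A, (c * f a) * ∑ b : A, g b :=
        Finset.sum_congr rfl fun a _ => (Finset.mul_sum _ _ _).symm
    _ = (∑ a : A, c * f a) * ∑ b : A, g b := (Finset.sum_mul _ _ _).symm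
    _ = _ := by rw [← Finset.mul_sum]

private lemma fact3c (c : ℝ) (f g h : A → ℝ) :
    (∑ a : A, ∑ b : A, ∑ d : A, c * f a * g b * h d)
      = c * (∑ a : A, f a) * (∑ b : A, g b) * (∑ d : A, h d) := by
  calc ∑ a : A, ∑ b : A, ∑ d : A, c * f a * g b * h d
      = ∑ a : A, ∑ b : A, (c * ∑ d : A, h d) * f a * g b := by
        refine Finset.sum_congr rfl fun a _ => Finset.sum_congr rfl fun b _ => ?_
        rw [← Finset.mul_sum]; ring
    _ = (c * ∑ d : A, h d) * (∑ a : A, f a) * (∑ b : A, g b) := fact2c _ f g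
    _ = _ := by ring

private lemma fact4c (c : ℝ) (f g h k : A → ℝ) :
    (∑ a : A, ∑ b : A, ∑ d : A, ∑ e : A, c * f a * g b * h d * k e)
      = c * (∑ a : A, f a) * (∑ b : A, g b) * (∑ d : A, h d) * (∑ e : A, k e) := by
  calc ∑ a : A, ∑ b : A, ∑ d : A, ∑ e : A, c * f a * g b * h d * k e
      = ∑ a : A, ∑ b : A, ∑ d : A, (c * ∑ e : A, k e) * f a * g b * h d := by
        refine Finset.sum_congr rfl fun a _ => Finset.sum_congr rfl fun b _ =>
          Finset.sum_congr rfl fun d _ => ?_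
        rw [← Finset.mul_sum]; ring
    _ = (c * ∑ e : A, k e) * (∑ a : A, f a) * (∑ b : A, g b) * (∑ d : A, h d) := fact3c _ f g h
    _ = _ := by ring

end Helpers

/-- truncated-correlation structure of the replicon polynomial.
For any two states `ω_t, ω_s` on `{±1}^Λ` (given by probability weights `p, q`)
and `c(σ,τ) = C_{Λ'}(σ,τ)/|Λ'|`,
`ω_t⊗ω_s(c₁₂²) − ω_s⊗ω_t⊗ω_s(c₁₂c₂₃) − ω_t⊗ω_s⊗ω_t(c₁₂c₂₃) + ω_t⊗ω_s⊗ω_s⊗ω_t(c₁₂c₃₄)`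
is the sum of products of truncated correlations. -/
theorem statement18
    {ι : Type*} [DecidableEq ι]
    (Λ Λ' : Finset ι) (hΛ : Λ.Nonempty) (hsub : Λ' ⊆ Λ)
    (Δ2 : Finset ι → ℝ≥0)
    (p q : (↥Λ → Bool) → ℝ)
    (hp : ∀ σ, 0 ≤ p σ) (hpsum : ∑ σ : ↥Λ → Bool, p σ = 1)
    (hq : ∀ σ, 0 ≤ q σ) (hqsum : ∑ σ : ↥Λ → Bool, q σ = 1) :
    (∑ σ1 : ↥Λ → Bool, ∑ σ2 : ↥Λ → Bool,
        (covOn Δ2 Λ' σ1 σ2 / (Λ'.card : ℝ)) ^ 2 * p σ1 * q σ2)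
      - (∑ σ1 : ↥Λ → Bool, ∑ σ2 : ↥Λ → Bool, ∑ σ3 : ↥Λ → Bool,
          (covOn Δ2 Λ' σ1 σ2 / (Λ'.card : ℝ)) * (covOn Δ2 Λ' σ2 σ3 / (Λ'.card : ℝ))
            * q σ1 * p σ2 * q σ3)
      - (∑ σ1 : ↥Λ → Bool, ∑ σ2 : ↥Λ → Bool, ∑ σ3 : ↥Λ → Bool,
          (covOn Δ2 Λ' σ1 σ2 / (Λ'.card : ℝ)) * (covOn Δ2 Λ' σ2 σ3 / (Λ'.card : ℝ))
            * p σ1 * q σ2 * p σ3)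
      + (∑ σ1 : ↥Λ → Bool, ∑ σ2 : ↥Λ → Bool, ∑ σ3 : ↥Λ → Bool, ∑ σ4 : ↥Λ → Bool,
          (covOn Δ2 Λ' σ1 σ2 / (Λ'.card : ℝ)) * (covOn Δ2 Λ' σ3 σ4 / (Λ'.card : ℝ))
            * p σ1 * q σ2 * q σ3 * p σ4) =
    (1 / (Λ'.card : ℝ) ^ 2) * ∑ X ∈ Λ'.powerset.erase ∅, ∑ Y ∈ Λ'.powerset.erase ∅,
      (Δ2 X : ℝ) * (Δ2 Y : ℝ)
        * ((∑ σ : ↥Λ → Bool, sigmaX σ X * sigmaX σ Y * p σ)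
            - (∑ σ : ↥Λ → Bool, sigmaX σ X * p σ) * (∑ σ : ↥Λ → Bool, sigmaX σ Y * p σ))
        * ((∑ σ : ↥Λ → Bool, sigmaX σ X * sigmaX σ Y * q σ)
            - (∑ σ : ↥Λ → Bool, sigmaX σ X * q σ) * (∑ σ : ↥Λ → Bool, sigmaX σ Y * q σ)) := by
  classical
  -- claim 1
  have c1 : (∑ σ1 : ↥Λ → Bool, ∑ σ2 : ↥Λ → Bool, covOn Δ2 Λ' σ1 σ2 ^ 2 * p σ1 * q σ2)
      = ∑ X ∈ Λ'.powerset.erase ∅, ∑ Y ∈ Λ'.powerset.erase ∅, (Δ2 X : ℝ) * (Δ2 Y : ℝ) * (∑ σ : ↥Λ → Bool, sigmaX σ X * sigmaX σ Y * p σ) * (∑ σ : ↥Λ → Bool, sigmaX σ X * sigmaX σ Y * q σ) := by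
    calc ∑ σ1 : ↥Λ → Bool, ∑ σ2 : ↥Λ → Bool, covOn Δ2 Λ' σ1 σ2 ^ 2 * p σ1 * q σ2
        = ∑ σ1 : ↥Λ → Bool, ∑ σ2 : ↥Λ → Bool, ∑ X ∈ Λ'.powerset.erase ∅, ∑ Y ∈ Λ'.powerset.erase ∅,
            ((Δ2 X : ℝ) * (Δ2 Y : ℝ))
              * (sigmaX σ1 X * sigmaX σ1 Y * p σ1)
              * (sigmaX σ2 X * sigmaX σ2 Y * q σ2) := by
          refine Finset.sum_congr rfl fun σ1 _ => Finset.sum_congr rfl fun σ2 _ => ?_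
          rw [pow_two]
          simp only [covOn]
          rw [Finset.sum_mul_sum]
          simp only [Finset.sum_mul]
          exact Finset.sum_congr rfl fun X _ => Finset.sum_congr rfl fun Y _ => by ring
      _ = ∑ X ∈ Λ'.powerset.erase ∅, ∑ Y ∈ Λ'.powerset.erase ∅, ∑ σ1 : ↥Λ → Bool, ∑ σ2 : ↥Λ → Bool,
            ((Δ2 X : ℝ) * (Δ2 Y : ℝ))
              * (sigmaX σ1 X * sigmaX σ1 Y * p σ1)
              * (sigmaX σ2 X * sigmaX σ2 Y * q σ2) := swap2 _ _ _
      _ = _ := Finset.sum_congr rfl fun X _ => Finset.sum_congr rfl fun Y _ => fact2c _ _ _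
  -- claim 2
  have c2 : (∑ σ1 : ↥Λ → Bool, ∑ σ2 : ↥Λ → Bool, ∑ σ3 : ↥Λ → Bool,
        covOn Δ2 Λ' σ1 σ2 * covOn Δ2 Λ' σ2 σ3 * q σ1 * p σ2 * q σ3)
      = ∑ X ∈ Λ'.powerset.erase ∅, ∑ Y ∈ Λ'.powerset.erase ∅, (Δ2 X : ℝ) * (Δ2 Y : ℝ) * (∑ σ : ↥Λ → Bool, sigmaX σ X * q σ) * (∑ σ : ↥Λ → Bool, sigmaX σ X * sigmaX σ Y * p σ) * (∑ σ : ↥Λ → Bool, sigmaX σ Y * q σ) := by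
    calc ∑ σ1 : ↥Λ → Bool, ∑ σ2 : ↥Λ → Bool, ∑ σ3 : ↥Λ → Bool,
          covOn Δ2 Λ' σ1 σ2 * covOn Δ2 Λ' σ2 σ3 * q σ1 * p σ2 * q σ3
        = ∑ σ1 : ↥Λ → Bool, ∑ σ2 : ↥Λ → Bool, ∑ σ3 : ↥Λ → Bool, ∑ X ∈ Λ'.powerset.erase ∅, ∑ Y ∈ Λ'.powerset.erase ∅,
            ((Δ2 X : ℝ) * (Δ2 Y : ℝ))
              * (sigmaX σ1 X * q σ1)
              * (sigmaX σ2 X * sigmaX σ2 Y * p σ2)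
              * (sigmaX σ3 Y * q σ3) := by
          refine Finset.sum_congr rfl fun σ1 _ => Finset.sum_congr rfl fun σ2 _ =>
            Finset.sum_congr rfl fun σ3 _ => ?_
          simp only [covOn]
          rw [Finset.sum_mul_sum]
          simp only [Finset.sum_mul]
          exact Finset.sum_congr rfl fun X _ => Finset.sum_congr rfl fun Y _ => by ring
      _ = ∑ X ∈ Λ'.powerset.erase ∅, ∑ Y ∈ Λ'.powerset.erase ∅, ∑ σ1 : ↥Λ → Bool, ∑ σ2 : ↥Λ → Bool, ∑ σ3 : ↥Λ → Bool,
            ((Δ2 X : ℝ) * (Δ2 Y : ℝ))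
              * (sigmaX σ1 X * q σ1)
              * (sigmaX σ2 X * sigmaX σ2 Y * p σ2)
              * (sigmaX σ3 Y * q σ3) := swap3 _ _ _
      _ = _ := Finset.sum_congr rfl fun X _ => Finset.sum_congr rfl fun Y _ => fact3c _ _ _ _
  -- claim 3
  have c3 : (∑ σ1 : ↥Λ → Bool, ∑ σ2 : ↥Λ → Bool, ∑ σ3 : ↥Λ → Bool,
        covOn Δ2 Λ' σ1 σ2 * covOn Δ2 Λ' σ2 σ3 * p σ1 * q σ2 * p σ3)
      = ∑ X ∈ Λ'.powerset.erase ∅, ∑ Y ∈ Λ'.powerset.erase ∅, (Δ2 X : ℝ) * (Δ2 Y : ℝ) * (∑ σ : ↥Λ → Bool, sigmaX σ X * p σ) * (∑ σ : ↥Λ → Bool, sigmaX σ X * sigmaX σ Y * q σ) * (∑ σ : ↥Λ → Bool, sigmaX σ Y * p σ) := by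
    calc ∑ σ1 : ↥Λ → Bool, ∑ σ2 : ↥Λ → Bool, ∑ σ3 : ↥Λ → Bool,
          covOn Δ2 Λ' σ1 σ2 * covOn Δ2 Λ' σ2 σ3 * p σ1 * q σ2 * p σ3
        = ∑ σ1 : ↥Λ → Bool, ∑ σ2 : ↥Λ → Bool, ∑ σ3 : ↥Λ → Bool, ∑ X ∈ Λ'.powerset.erase ∅, ∑ Y ∈ Λ'.powerset.erase ∅,
            ((Δ2 X : ℝ) * (Δ2 Y : ℝ))
              * (sigmaX σ1 X * p σ1)
              * (sigmaX σ2 X * sigmaX σ2 Y * q σ2)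
              * (sigmaX σ3 Y * p σ3) := by
          refine Finset.sum_congr rfl fun σ1 _ => Finset.sum_congr rfl fun σ2 _ =>
            Finset.sum_congr rfl fun σ3 _ => ?_
          simp only [covOn]
          rw [Finset.sum_mul_sum]
          simp only [Finset.sum_mul]
          exact Finset.sum_congr rfl fun X _ => Finset.sum_congr rfl fun Y _ => by ring
      _ = ∑ X ∈ Λ'.powerset.erase ∅, ∑ Y ∈ Λ'.powerset.erase ∅, ∑ σ1 : ↥Λ → Bool, ∑ σ2 : ↥Λ → Bool, ∑ σ3 : ↥Λ → Bool,
            ((Δ2 X : ℝ) * (Δ2 Y : ℝ))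
              * (sigmaX σ1 X * p σ1)
              * (sigmaX σ2 X * sigmaX σ2 Y * q σ2)
              * (sigmaX σ3 Y * p σ3) := swap3 _ _ _
      _ = _ := Finset.sum_congr rfl fun X _ => Finset.sum_congr rfl fun Y _ => fact3c _ _ _ _
  -- claim 4
  have c4 : (∑ σ1 : ↥Λ → Bool, ∑ σ2 : ↥Λ → Bool, ∑ σ3 : ↥Λ → Bool, ∑ σ4 : ↥Λ → Bool,
        covOn Δ2 Λ' σ1 σ2 * covOn Δ2 Λ' σ3 σ4 * p σ1 * q σ2 * q σ3 * p σ4)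
      = ∑ X ∈ Λ'.powerset.erase ∅, ∑ Y ∈ Λ'.powerset.erase ∅, (Δ2 X : ℝ) * (Δ2 Y : ℝ) * (∑ σ : ↥Λ → Bool, sigmaX σ X * p σ) * (∑ σ : ↥Λ → Bool, sigmaX σ X * q σ) * (∑ σ : ↥Λ → Bool, sigmaX σ Y * q σ) * (∑ σ : ↥Λ → Bool, sigmaX σ Y * p σ) := by
    calc ∑ σ1 : ↥Λ → Bool, ∑ σ2 : ↥Λ → Bool, ∑ σ3 : ↥Λ → Bool, ∑ σ4 : ↥Λ → Bool,
          covOn Δ2 Λ' σ1 σ2 * covOn Δ2 Λ' σ3 σ4 * p σ1 * q σ2 * q σ3 * p σ4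
        = ∑ σ1 : ↥Λ → Bool, ∑ σ2 : ↥Λ → Bool, ∑ σ3 : ↥Λ → Bool, ∑ σ4 : ↥Λ → Bool, ∑ X ∈ Λ'.powerset.erase ∅, ∑ Y ∈ Λ'.powerset.erase ∅,
            ((Δ2 X : ℝ) * (Δ2 Y : ℝ))
              * (sigmaX σ1 X * p σ1)
              * (sigmaX σ2 X * q σ2)
              * (sigmaX σ3 Y * q σ3)
              * (sigmaX σ4 Y * p σ4) := by
          refine Finset.sum_congr rfl fun σ1 _ => Finset.sum_congr rfl fun σ2 _ =>
            Finset.sum_congr rfl fun σ3 _ => Finset.sum_congr rfl fun σ4 _ => ?_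
          simp only [covOn]
          rw [Finset.sum_mul_sum]
          simp only [Finset.sum_mul]
          exact Finset.sum_congr rfl fun X _ => Finset.sum_congr rfl fun Y _ => by ring
      _ = ∑ X ∈ Λ'.powerset.erase ∅, ∑ Y ∈ Λ'.powerset.erase ∅, ∑ σ1 : ↥Λ → Bool, ∑ σ2 : ↥Λ → Bool, ∑ σ3 : ↥Λ → Bool, ∑ σ4 : ↥Λ → Bool,
            ((Δ2 X : ℝ) * (Δ2 Y : ℝ))
              * (sigmaX σ1 X * p σ1)
              * (sigmaX σ2 X * q σ2)
              * (sigmaX σ3 Y * q σ3)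
              * (sigmaX σ4 Y * p σ4) := swap4 _ _ _
      _ = _ := Finset.sum_congr rfl fun X _ => Finset.sum_congr rfl fun Y _ => fact4c _ _ _ _ _
  -- pull the 1/n² factor out of each LHS term
  have h1 : (∑ σ1 : ↥Λ → Bool, ∑ σ2 : ↥Λ → Bool, (covOn Δ2 Λ' σ1 σ2 / (Λ'.card : ℝ)) ^ 2 * p σ1 * q σ2)
      = (1 / (Λ'.card : ℝ) ^ 2) * ∑ σ1 : ↥Λ → Bool, ∑ σ2 : ↥Λ → Bool, covOn Δ2 Λ' σ1 σ2 ^ 2 * p σ1 * q σ2 := by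
    rw [Finset.mul_sum]
    refine Finset.sum_congr rfl fun σ1 _ => ?_
    rw [Finset.mul_sum]
    exact Finset.sum_congr rfl fun σ2 _ => by ring
  have h2 : (∑ σ1 : ↥Λ → Bool, ∑ σ2 : ↥Λ → Bool, ∑ σ3 : ↥Λ → Bool,
        (covOn Δ2 Λ' σ1 σ2 / (Λ'.card : ℝ)) * (covOn Δ2 Λ' σ2 σ3 / (Λ'.card : ℝ)) * q σ1 * p σ2 * q σ3)
      = (1 / (Λ'.card : ℝ) ^ 2) * ∑ σ1 : ↥Λ → Bool, ∑ σ2 : ↥Λ → Bool, ∑ σ3 : ↥Λ → Bool,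
          covOn Δ2 Λ' σ1 σ2 * covOn Δ2 Λ' σ2 σ3 * q σ1 * p σ2 * q σ3 := by
    rw [Finset.mul_sum]
    refine Finset.sum_congr rfl fun σ1 _ => ?_
    rw [Finset.mul_sum]
    refine Finset.sum_congr rfl fun σ2 _ => ?_
    rw [Finset.mul_sum]
    exact Finset.sum_congr rfl fun σ3 _ => by ring
  have h3 : (∑ σ1 : ↥Λ → Bool, ∑ σ2 : ↥Λ → Bool, ∑ σ3 : ↥Λ → Bool,
        (covOn Δ2 Λ' σ1 σ2 / (Λ'.card : ℝ)) * (covOn Δ2 Λ' σ2 σ3 / (Λ'.card : ℝ)) * p σ1 * q σ2 * p σ3)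
      = (1 / (Λ'.card : ℝ) ^ 2) * ∑ σ1 : ↥Λ → Bool, ∑ σ2 : ↥Λ → Bool, ∑ σ3 : ↥Λ → Bool,
          covOn Δ2 Λ' σ1 σ2 * covOn Δ2 Λ' σ2 σ3 * p σ1 * q σ2 * p σ3 := by
    rw [Finset.mul_sum]
    refine Finset.sum_congr rfl fun σ1 _ => ?_
    rw [Finset.mul_sum]
    refine Finset.sum_congr rfl fun σ2 _ => ?_
    rw [Finset.mul_sum]
    exact Finset.sum_congr rfl fun σ3 _ => by ring
  have h4 : (∑ σ1 : ↥Λ → Bool, ∑ σ2 : ↥Λ → Bool, ∑ σ3 : ↥Λ → Bool, ∑ σ4 : ↥Λ → Bool,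
        (covOn Δ2 Λ' σ1 σ2 / (Λ'.card : ℝ)) * (covOn Δ2 Λ' σ3 σ4 / (Λ'.card : ℝ)) * p σ1 * q σ2 * q σ3 * p σ4)
      = (1 / (Λ'.card : ℝ) ^ 2) * ∑ σ1 : ↥Λ → Bool, ∑ σ2 : ↥Λ → Bool, ∑ σ3 : ↥Λ → Bool, ∑ σ4 : ↥Λ → Bool,
          covOn Δ2 Λ' σ1 σ2 * covOn Δ2 Λ' σ3 σ4 * p σ1 * q σ2 * q σ3 * p σ4 := by
    rw [Finset.mul_sum]
    refine Finset.sum_congr rfl fun σ1 _ => ?_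
    rw [Finset.mul_sum]
    refine Finset.sum_congr rfl fun σ2 _ => ?_
    rw [Finset.mul_sum]
    refine Finset.sum_congr rfl fun σ3 _ => ?_
    rw [Finset.mul_sum]
    exact Finset.sum_congr rfl fun σ4 _ => by ring
  -- expand the RHS truncated correlations
  have hRHS : (∑ X ∈ Λ'.powerset.erase ∅, ∑ Y ∈ Λ'.powerset.erase ∅,
        (Δ2 X : ℝ) * (Δ2 Y : ℝ) * ((∑ σ : ↥Λ → Bool, sigmaX σ X * sigmaX σ Y * p σ) - (∑ σ : ↥Λ → Bool, sigmaX σ X * p σ) * (∑ σ : ↥Λ → Bool, sigmaX σ Y * p σ)) * ((∑ σ : ↥Λ → Bool, sigmaX σ X * sigmaX σ Y * q σ) - (∑ σ : ↥Λ → Bool, sigmaX σ X * q σ) * (∑ σ : ↥Λ → Bool, sigmaX σ Y * q σ)))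
      = (∑ X ∈ Λ'.powerset.erase ∅, ∑ Y ∈ Λ'.powerset.erase ∅, (Δ2 X : ℝ) * (Δ2 Y : ℝ) * (∑ σ : ↥Λ → Bool, sigmaX σ X * sigmaX σ Y * p σ) * (∑ σ : ↥Λ → Bool, sigmaX σ X * sigmaX σ Y * q σ))
        - (∑ X ∈ Λ'.powerset.erase ∅, ∑ Y ∈ Λ'.powerset.erase ∅, (Δ2 X : ℝ) * (Δ2 Y : ℝ) * (∑ σ : ↥Λ → Bool, sigmaX σ X * q σ) * (∑ σ : ↥Λ → Bool, sigmaX σ X * sigmaX σ Y * p σ) * (∑ σ : ↥Λ → Bool, sigmaX σ Y * q σ))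
        - (∑ X ∈ Λ'.powerset.erase ∅, ∑ Y ∈ Λ'.powerset.erase ∅, (Δ2 X : ℝ) * (Δ2 Y : ℝ) * (∑ σ : ↥Λ → Bool, sigmaX σ X * p σ) * (∑ σ : ↥Λ → Bool, sigmaX σ X * sigmaX σ Y * q σ) * (∑ σ : ↥Λ → Bool, sigmaX σ Y * p σ))
        + (∑ X ∈ Λ'.powerset.erase ∅, ∑ Y ∈ Λ'.powerset.erase ∅, (Δ2 X : ℝ) * (Δ2 Y : ℝ) * (∑ σ : ↥Λ → Bool, sigmaX σ X * p σ) * (∑ σ : ↥Λ → Bool, sigmaX σ X * q σ) * (∑ σ : ↥Λ → Bool, sigmaX σ Y * q σ) * (∑ σ : ↥Λ → Bool, sigmaX σ Y * p σ)) := by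
    simp only [← Finset.sum_sub_distrib, ← Finset.sum_add_distrib]
    exact Finset.sum_congr rfl fun X _ => Finset.sum_congr rfl fun Y _ => by ring
  rw [h1, h2, h3, h4, c1, c2, c3, c4, hRHS]
  ring
end
end
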